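/- Let U, V ⊆ ℝ^n be open, F : U → ℝ^p and G : V → ℝ^p differentiable maps, and φ : U → V a lipeomorphism such that F ≈_x G via φ at a point x ∈ U. Then rank D_xF = rank D_{φ(x)}G, where D_xF denotes the total derivative of F at x. -/

import Mathlib

open Filter Set Metric Topology Asymptotics

noncomputable section

set_option synthInstance.maxHeartbeats 1000000

/-- `ℝ^n` with the Euclidean structure. -/
abbrev Eucl (n : ℕ) : Type := EuclideanSpace ℝ (Fin n)

variable {V W : Type*} [NormedAddCommGroup V] [NormedSpace ℝ V]
  [NormedAddCommGroup W] [NormedSpace ℝ W]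

/-- `F` admits the `α`-derivative `H` at `x`:  `H` is continuous and for every direction `v`,
`F (x + t v) - F x = t ^ α • H v + o(t ^ α)` as `t → 0⁺`. -/
def HasAlphaDerivAt (F : V → W) (x : V) (α : ℝ) (H : V → W) : Prop :=
  Continuous H ∧ ∀ v : V,
    Tendsto (fun t : ℝ => (t ^ α)⁻¹ • (F (x + t • v) - F x - t ^ α • H v))
      (𝓝[>] (0 : ℝ)) (𝓝 0)

/-- `F` has order `α` at `x`: for every nonzero direction `v` the limit of
`F (x + t v) / t ^ α` as `t → 0⁺` exists, and for at least one `v` it is nonzero. -/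
def HasOrderAt (F : V → W) (x : V) (α : ℝ) : Prop :=
  (∀ v : V, v ≠ 0 → ∃ L : W,
      Tendsto (fun t : ℝ => (t ^ α)⁻¹ • F (x + t • v)) (𝓝[>] (0 : ℝ)) (𝓝 L)) ∧
  ∃ v : V, v ≠ 0 ∧ ∃ L : W, L ≠ 0 ∧
      Tendsto (fun t : ℝ => (t ^ α)⁻¹ • F (x + t • v)) (𝓝[>] (0 : ℝ)) (𝓝 L)

/-- `φ` is a lipeomorphism from `U` onto `V'`. -/
def IsLipeoOn (φ : V → W) (U : Set V) (V' : Set W) : Prop :=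
  Set.BijOn φ U V' ∧ ∃ c : ℝ, 1 ≤ c ∧ ∀ x ∈ U, ∀ y ∈ U,
    (1 / c) * ‖x - y‖ ≤ ‖φ x - φ y‖ ∧ ‖φ x - φ y‖ ≤ c * ‖x - y‖

/-- `d` is a pseudo-Lipschitz derivative of `φ` at `x`: along some sequence `t_j → 0⁺`,
`(φ (x + t_j v) - φ x) / t_j → d v` uniformly on compact sets. -/
def IsPseudoLipDerivAt (φ : V → V) (x : V) (d : V → V) : Prop :=
  ∃ t : ℕ → ℝ, (∀ j, 0 < t j) ∧ Tendsto t atTop (𝓝 (0 : ℝ)) ∧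
    ∀ K : Set V, IsCompact K →
      TendstoUniformlyOn (fun j v => (t j)⁻¹ • (φ (x + t j • v) - φ x)) d atTop K

/-- `F ∼ G` at `x₀`: asymptotic equivalence of `F` and `G` at `x₀`. -/
def AsympEquivAt (F G : V → W) (x₀ : V) : Prop :=
  ∃ c₁ c₂ : ℝ, 0 < c₁ ∧ 0 < c₂ ∧
    ∀ᶠ x in 𝓝 x₀, c₂ * ‖F x‖ ≤ ‖G x‖ ∧ ‖G x‖ ≤ c₁ * ‖F x‖

/-- `F ≈ G` at `x₀` via the lipeomorphism `φ`. -/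
def AsympLipEquivAtVia {V' : Type*} [NormedAddCommGroup V'] [NormedSpace ℝ V']
    (F : V → W) (G : V' → W) (φ : V → V') (x₀ : V) : Prop :=
  ∃ c : ℝ, 1 ≤ c ∧ ∀ᶠ x in 𝓝 x₀,
    (1 / c) * ‖F x - F x₀‖ ≤ ‖G (φ x) - G (φ x₀)‖ ∧
      ‖G (φ x) - G (φ x₀)‖ ≤ c * ‖F x - F x₀‖

/-- The degree-`m` term of the Taylor series of `F` at `0`; for a `C^∞` germ of
finite order `m` this is its initial part `in(F)`. -/
def inPart (F : V → ℝ) (m : ℕ) : V → ℝ :=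
  fun x => (m.factorial : ℝ)⁻¹ • iteratedFDeriv ℝ m F 0 (fun _ => x)

set_option maxHeartbeats 2000000

lemma coord_le {N : ℕ} (x : EuclideanSpace ℝ (Fin N)) (i : Fin N) : |x i| ≤ ‖x‖ := by
  rw [EuclideanSpace.norm_eq]
  have : |x i| = Real.sqrt (|x i| ^ 2) := by rw [Real.sqrt_sq (abs_nonneg _)]
  rw [this]
  apply Real.sqrt_le_sqrt
  rw [sq_abs]
  have : ∀ j, (0:ℝ) ≤ ‖x j‖ ^ 2 := fun j => sq_nonneg _
  calc x i ^ 2 = ‖x i‖ ^ 2 := by rw [Real.norm_eq_abs, sq_abs]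
    _ ≤ ∑ j, ‖x j‖ ^ 2 := Finset.single_le_sum (fun j _ => this j) (Finset.mem_univ i)

lemma norm_le_of_coord {N : ℕ} (x : EuclideanSpace ℝ (Fin N)) (s : ℝ) (hs : 0 ≤ s)
    (h : ∀ i, |x i| ≤ s) : ‖x‖ ≤ s * Real.sqrt N := by
  rw [EuclideanSpace.norm_eq]
  have h1 : ∑ j, ‖x j‖ ^ 2 ≤ (N : ℝ) * s ^ 2 := by
    calc ∑ j, ‖x j‖ ^ 2 ≤ ∑ _j : Fin N, s ^ 2 := by
          apply Finset.sum_le_sum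
          intro j _
          rw [Real.norm_eq_abs]
          exact pow_le_pow_left₀ (abs_nonneg _) (h j) 2
      _ = (N : ℝ) * s ^ 2 := by simp [Finset.sum_const, Finset.card_univ, mul_comm]
  calc Real.sqrt (∑ j, ‖x j‖ ^ 2) ≤ Real.sqrt ((N:ℝ) * s ^ 2) := Real.sqrt_le_sqrt h1
    _ = s * Real.sqrt N := by
        rw [Real.sqrt_mul (Nat.cast_nonneg N), Real.sqrt_sq hs]; ring

/-- Upper bound on the cardinality of an `r`-separated set in a ball of radius `R`. -/
lemma sep_ub {N : ℕ} (R r : ℝ) (hr : 0 < r) (hR : 0 ≤ R)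
    (S : Finset (EuclideanSpace ℝ (Fin N)))
    (hball : ∀ v ∈ S, ‖v‖ ≤ R) (hsep : ∀ v ∈ S, ∀ v' ∈ S, v ≠ v' → r ≤ ‖v - v'‖) :
    (S.card : ℝ) ≤ (2 * R * (Real.sqrt N + 1) / r + 3) ^ N := by
  set s : ℝ := r / (Real.sqrt N + 1) with hs_def
  have hsqrtN : (0:ℝ) ≤ Real.sqrt N := Real.sqrt_nonneg _
  have hs : 0 < s := div_pos hr (by linarith)
  set κ : EuclideanSpace ℝ (Fin N) → (Fin N → ℤ) := fun v i => ⌊v i / s⌋ with hκ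
  -- κ is injective on S
  have hinj : Set.InjOn κ S := by
    intro v hv v' hv' hvv'
    by_contra hne
    have h1 : ∀ i, |v i - v' i| ≤ s := by
      intro i
      have h2 : |v i / s - v' i / s| < 1 :=
        Int.abs_sub_lt_one_of_floor_eq_floor (congrFun hvv' i)
      have h3 : v i / s - v' i / s = (v i - v' i) / s := by ring
      rw [h3, abs_div, abs_of_pos hs, div_lt_one hs] at h2
      exact h2.le
    have h4 : ‖v - v'‖ ≤ s * Real.sqrt N := by
      apply norm_le_of_coord _ _ hs.le
      intro i
      exact h1 i
    have h5 : s * Real.sqrt N < r := by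
      rw [hs_def, div_mul_eq_mul_div, div_lt_iff₀ (by linarith)]
      nlinarith
    exact absurd (hsep v hv v' hv' hne) (by push_neg; linarith)
  -- κ maps S into a box
  set M : ℤ := ⌈R / s⌉ with hM
  have hMnonneg : 0 ≤ M := Int.ceil_nonneg (div_nonneg hR hs.le)
  have hMle : (M : ℝ) ≤ R / s + 1 := (Int.ceil_lt_add_one _).le
  have hrange : ∀ v ∈ S, κ v ∈ Fintype.piFinset (fun _ : Fin N => Finset.Icc (-M) M) := by
    intro v hv
    rw [Fintype.mem_piFinset]
    intro i
    rw [Finset.mem_Icc]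
    have h1 : |v i| ≤ R := (coord_le v i).trans (hball v hv)
    rw [abs_le] at h1
    constructor
    · apply Int.le_floor.2
      push_cast
      rw [neg_le]
      calc -(v i / s) = (-(v i)) / s := by ring
        _ ≤ R / s := by gcongr; linarith
        _ ≤ M := Int.le_ceil _
    · apply (Int.floor_le_ceil _).trans
      apply Int.ceil_le_ceil
      gcongr
      exact h1.2
  -- count
  have hcard : S.card ≤ (Fintype.piFinset (fun _ : Fin N => Finset.Icc (-M) M)).card :=
    Finset.card_le_card_of_injOn κ hrange hinj
  have hbox : (Fintype.piFinset (fun _ : Fin N => Finset.Icc (-M) M)).card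
      = (2 * M + 1).toNat ^ N := by
    rw [Fintype.card_piFinset]
    simp [Int.card_Icc]
    congr 1
    omega
  calc (S.card : ℝ) ≤ ((2 * M + 1).toNat ^ N : ℕ) := by exact_mod_cast hcard.trans_eq hbox
    _ = ((2 * M + 1).toNat : ℝ) ^ N := by push_cast; ring
    _ ≤ (2 * R * (Real.sqrt N + 1) / r + 3) ^ N := by
        apply pow_le_pow_left₀ (Nat.cast_nonneg _)
        have h0 : (0:ℤ) ≤ 2 * M + 1 := by omega
        have hcast : ((2 * M + 1).toNat : ℝ) = 2 * (M:ℝ) + 1 := by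
          rw [← Int.cast_natCast, Int.toNat_of_nonneg h0]; push_cast; ring
        rw [hcast]
        have hRs : R / s = R * (Real.sqrt N + 1) / r := by
          rw [hs_def]; field_simp
        have h2 : 2 * (M:ℝ) + 1 ≤ 2 * (R / s) + 3 := by linarith
        rw [hRs] at h2
        have h3 : 2 * R * (Real.sqrt N + 1) / r = 2 * (R * (Real.sqrt N + 1) / r) := by ring
        rw [h3]
        linarith

/-- A grid of `m ^ N` points in a ball of radius `s * m * √N`, pairwise `s`-separated. -/
lemma grid_lb (N m : ℕ) (s : ℝ) (hs : 0 < s) :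
    ∃ S : Finset (EuclideanSpace ℝ (Fin N)), S.card = m ^ N ∧
      (∀ v ∈ S, ‖v‖ ≤ s * m * Real.sqrt N) ∧
      (∀ v ∈ S, ∀ v' ∈ S, v ≠ v' → s ≤ ‖v - v'‖) := by
  classical
  set ι : (Fin N → Fin m) → EuclideanSpace ℝ (Fin N) := fun a => WithLp.toLp 2 (fun i => s * (a i : ℝ))
  have hι : Function.Injective ι := by
    intro a b hab
    funext i
    have := congrFun (congrArg WithLp.ofLp hab) i
    simp only [ι] at this
    have h2 : ((a i : ℝ)) = b i := mul_left_cancel₀ hs.ne' this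
    exact Fin.ext (by exact_mod_cast h2)
  refine ⟨Finset.image ι Finset.univ, ?_, ?_, ?_⟩
  · rw [Finset.card_image_of_injective _ hι, Finset.card_univ, Fintype.card_fun]
    simp
  · intro v hv
    rcases Finset.mem_image.1 hv with ⟨a, _, rfl⟩
    calc ‖ι a‖ ≤ (s * m) * Real.sqrt N := by
          apply norm_le_of_coord _ _ (by positivity)
          intro i
          have h1 : (a i : ℝ) ≤ m := by
            have := (a i).2
            exact_mod_cast this.le
          have h0 : (0:ℝ) ≤ (a i : ℝ) := Nat.cast_nonneg _
          have : |s * (a i : ℝ)| = s * (a i : ℝ) := abs_of_nonneg (by positivity)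
          rw [show (ι a) i = s * (a i : ℝ) from rfl, this]
          nlinarith
      _ = s * m * Real.sqrt N := by ring
  · intro v hv v' hv' hne
    rcases Finset.mem_image.1 hv with ⟨a, _, rfl⟩
    rcases Finset.mem_image.1 hv' with ⟨b, _, rfl⟩
    have hab : a ≠ b := fun h => hne (by rw [h])
    rcases Function.ne_iff.1 hab with ⟨i, hi⟩
    calc s = s * 1 := by ring
      _ ≤ s * |(a i : ℝ) - (b i : ℝ)| := by
          apply mul_le_mul_of_nonneg_left _ hs.le
          have : (a i : ℤ) ≠ (b i : ℤ) := by
            intro h; exact hi (Fin.ext (by exact_mod_cast h))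
          have h1 : (1:ℤ) ≤ |(a i : ℤ) - (b i : ℤ)| := by
            rcases lt_or_gt_of_ne this with h | h
            · rw [abs_of_neg (by omega)]; omega
            · rw [abs_of_pos (by omega)]; omega
          calc (1:ℝ) ≤ |((a i : ℤ) : ℝ) - ((b i : ℤ) : ℝ)| := by
                rw [show ((a i : ℤ):ℝ) - ((b i : ℤ):ℝ) = (((a i : ℤ) - (b i : ℤ) : ℤ) : ℝ) by push_cast; ring,
                   ← Int.cast_abs]
                exact_mod_cast h1
            _ = |(a i : ℝ) - (b i : ℝ)| := by norm_num
      _ = |s * (a i : ℝ) - s * (b i : ℝ)| := by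
          rw [show s * (a i : ℝ) - s * (b i : ℝ) = s * ((a i : ℝ) - (b i : ℝ)) by ring,
            abs_mul, abs_of_pos hs]
      _ ≤ ‖ι a - ι b‖ := by
          have : (ι a - ι b) i = s * (a i : ℝ) - s * (b i : ℝ) := rfl
          have h2 := coord_le (ι a - ι b) i
          rw [this] at h2
          exact h2

lemma ker_le_ker {n p : ℕ} (F G : Eucl n → Eucl p) (x x' : Eucl n)
    (hF : DifferentiableAt ℝ F x) (hG : DifferentiableAt ℝ G x')
    (ψ : Eucl n → Eucl n) (c : ℝ) (hc : 1 ≤ c) (r0 : ℝ) (hr0 : 0 < r0)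
    (hψ0 : ψ 0 = 0)
    (hbil : ∀ v v' : Eucl n, ‖v‖ < r0 → ‖v'‖ < r0 →
       (1/c) * ‖v - v'‖ ≤ ‖ψ v - ψ v'‖ ∧ ‖ψ v - ψ v'‖ ≤ c * ‖v - v'‖)
    (hcmp : ∀ v : Eucl n, ‖v‖ < r0 → ‖G (x' + ψ v) - G x'‖ ≤ c * ‖F (x + v) - F x‖) :
    Module.finrank ℝ (LinearMap.ker ((fderiv ℝ F x : Eucl n →L[ℝ] Eucl p) : Eucl n →ₗ[ℝ] Eucl p)) ≤
      Module.finrank ℝ (LinearMap.ker ((fderiv ℝ G x' : Eucl n →L[ℝ] Eucl p) : Eucl n →ₗ[ℝ] Eucl p)) := by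
  classical
  by_contra hlt
  push_neg at hlt
  set A := fderiv ℝ F x with hA
  set B := fderiv ℝ G x' with hB
  set K := LinearMap.ker ((A : Eucl n →L[ℝ] Eucl p) : Eucl n →ₗ[ℝ] Eucl p) with hK
  set L := LinearMap.ker ((B : Eucl n →L[ℝ] Eucl p) : Eucl n →ₗ[ℝ] Eucl p) with hL
  set k := Module.finrank ℝ K with hk
  set l := Module.finrank ℝ L with hl
  have hcpos : (0:ℝ) < c := lt_of_lt_of_le one_pos hc
  -- antilipschitz constant for B on Lᗮ
  have hker : LinearMap.ker (((B : Eucl n →ₗ[ℝ] Eucl p)).comp (Submodule.subtype Lᗮ)) = ⊥ := by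
    rw [LinearMap.ker_eq_bot']
    rintro ⟨u, hu⟩ h
    have huL : u ∈ L := by
      simpa [hL, LinearMap.mem_ker] using h
    have : u = 0 := Submodule.disjoint_def.1 L.orthogonal_disjoint u huL hu
    exact Subtype.ext this
  obtain ⟨γ, hγpos, hγanti⟩ := LinearMap.exists_antilipschitzWith _ hker
  have hγ0 : (0:ℝ) < γ := hγpos
  have hproj : ∀ w : Eucl n, ‖w - (L.orthogonalProjectionOnto w : Eucl n)‖ ≤ γ * ‖B w‖ := by
    intro w
    have hmem : w - (L.orthogonalProjectionOnto w : Eucl n) ∈ Lᗮ :=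
      Submodule.sub_starProjection_mem_orthogonal (K := L) w
    have h1 := hγanti.le_mul_dist ⟨_, hmem⟩ 0
    have hBQ : B ((L.orthogonalProjectionOnto w : Eucl n)) = 0 := by
      have := (L.orthogonalProjectionOnto w).2
      exact this
    simp only [dist_zero_right, map_zero, dist_zero_right] at h1
    have h2 : ‖((⟨_, hmem⟩ : Lᗮ) : Eucl n)‖ ≤
        γ * ‖(B : Eucl n →ₗ[ℝ] Eucl p).comp (Submodule.subtype Lᗮ) ⟨_, hmem⟩‖ := by
      simpa using h1
    have h3 : (B : Eucl n →ₗ[ℝ] Eucl p).comp (Submodule.subtype Lᗮ)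
        ⟨w - (L.orthogonalProjectionOnto w : Eucl n), hmem⟩ = B w := by
      show B (w - _) = B w
      rw [map_sub, hBQ, sub_zero]
    rw [h3] at h2
    exact h2
  -- the little-o estimates
  have hAlo : (fun v : Eucl n => F (x + v) - F x - A v) =o[𝓝 0] (fun v => v) :=
    hasFDerivAt_iff_isLittleO_nhds_zero.1 hF.hasFDerivAt
  have hBlo : (fun w : Eucl n => G (x' + w) - G x' - B w) =o[𝓝 0] (fun w => w) :=
    hasFDerivAt_iff_isLittleO_nhds_zero.1 hG.hasFDerivAt
  have C1 : ∀ ε : ℝ, 0 < ε → ∃ δ : ℝ, 0 < δ ∧ δ ≤ r0 ∧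
      ∀ v : Eucl n, v ∈ K → ‖v‖ < δ → ‖B (ψ v)‖ ≤ ε * ‖v‖ := by
    intro ε hε
    have h1 := hAlo.def (show (0:ℝ) < ε/(2*c*c) by positivity)
    have h2 := hBlo.def (show (0:ℝ) < ε/(2*c) by positivity)
    rw [Metric.eventually_nhds_iff] at h1 h2
    obtain ⟨δ1, hδ1, hh1⟩ := h1
    obtain ⟨δ2, hδ2, hh2⟩ := h2
    refine ⟨min r0 (min δ1 (δ2 / c)), by positivity, min_le_left _ _, ?_⟩
    intro v hvK hv
    have hvr0 : ‖v‖ < r0 := lt_of_lt_of_le hv (min_le_left _ _)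
    have hvδ1 : ‖v‖ < δ1 := lt_of_lt_of_le hv ((min_le_right _ _).trans (min_le_left _ _))
    have hvδ2c : ‖v‖ < δ2 / c := lt_of_lt_of_le hv ((min_le_right _ _).trans (min_le_right _ _))
    have hψv : ‖ψ v‖ ≤ c * ‖v‖ := by
      have h0 : ‖(0 : Eucl n)‖ < r0 := by simpa using hr0
      have := (hbil v 0 hvr0 h0).2
      simpa [hψ0] using this
    have hψvδ2 : ‖ψ v‖ < δ2 := by
      calc ‖ψ v‖ ≤ c * ‖v‖ := hψv
        _ < c * (δ2 / c) := by gcongr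
        _ = δ2 := by field_simp
    have e1 : ‖F (x + v) - F x - A v‖ ≤ ε/(2*c*c) * ‖v‖ := by
      have := hh1 (y := v) (by simpa [dist_zero_right] using hvδ1)
      simpa using this
    have hAv : A v = 0 := by
      have := hvK
      rw [hK, LinearMap.mem_ker] at this
      simpa using this
    have e1' : ‖F (x + v) - F x‖ ≤ ε/(2*c*c) * ‖v‖ := by
      rw [hAv] at e1; simpa using e1
    have e2 : ‖G (x' + ψ v) - G x' - B (ψ v)‖ ≤ ε/(2*c) * ‖ψ v‖ := by
      have := hh2 (y := ψ v) (by simpa [dist_zero_right] using hψvδ2)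
      simpa using this
    have e3 : ‖G (x' + ψ v) - G x'‖ ≤ c * ‖F (x + v) - F x‖ := hcmp v hvr0
    have e4 : ‖B (ψ v)‖ ≤ ‖G (x' + ψ v) - G x'‖ + ‖G (x' + ψ v) - G x' - B (ψ v)‖ := by
      have h := norm_sub_le (G (x' + ψ v) - G x') (G (x' + ψ v) - G x' - B (ψ v))
      have heq : G (x' + ψ v) - G x' - (G (x' + ψ v) - G x' - B (ψ v)) = B (ψ v) := by abel
      rw [heq] at h
      exact h
    have e5 : ε/(2*c) * ‖ψ v‖ ≤ ε/(2*c) * (c * ‖v‖) := by gcongr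
    have e6 : ‖G (x' + ψ v) - G x'‖ ≤ c * (ε/(2*c*c) * ‖v‖) := e3.trans (by gcongr)
    have h7 : c * (ε/(2*c*c) * ‖v‖) = ε * ‖v‖ / (2*c) := by field_simp
    have h8 : ε/(2*c) * (c * ‖v‖) = ε * ‖v‖ / 2 := by field_simp
    have h9 : ε * ‖v‖ / (2*c) ≤ ε * ‖v‖ / 2 := by
      have hnn : 0 ≤ ε * ‖v‖ := by positivity
      gcongr
      · linarith
    calc ‖B (ψ v)‖ ≤ c * (ε/(2*c*c) * ‖v‖) + ε/(2*c) * (c * ‖v‖) := by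
          refine e4.trans (add_le_add e6 (e5.trans' e2))
      _ ≤ ε * ‖v‖ := by
          rw [h7, h8]
          have hnn : 0 ≤ ε * ‖v‖ := by positivity
          linarith
  -- dimension and constants
  have hk1 : 1 ≤ k := by omega
  set bK := stdOrthonormalBasis ℝ K with hbK
  set bL := stdOrthonormalBasis ℝ L with hbL
  have hsl : (0:ℝ) ≤ Real.sqrt l := Real.sqrt_nonneg _
  have hsk1 : (1:ℝ) ≤ Real.sqrt k := by
    rw [show (1:ℝ) = Real.sqrt 1 by simp]
    exact Real.sqrt_le_sqrt (by exact_mod_cast hk1)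
  set D : ℝ := 8 * c^2 * (Real.sqrt l + 1) * Real.sqrt k + 3 with hD
  have hD1 : (1:ℝ) ≤ D := by
    have h0 : (0:ℝ) ≤ 8 * c^2 * (Real.sqrt l + 1) * Real.sqrt k := by positivity
    rw [hD]; linarith
  set m : ℕ := ⌈D ^ l⌉₊ + 1 with hm
  have hm1 : 1 ≤ m := by omega
  have hmD : D ^ l < (m:ℝ) := by
    calc D ^ l ≤ (⌈D ^ l⌉₊ : ℝ) := Nat.le_ceil _
      _ < m := by exact_mod_cast Nat.lt_succ_self _
  have hmpos : (0:ℝ) < m := by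
    have : (0:ℝ) < D ^ l := by positivity
    linarith
  have hm1R : (1:ℝ) ≤ m := by exact_mod_cast hm1
  set ε₀ : ℝ := ((γ:ℝ))⁻¹ / (4 * c * m * Real.sqrt k) with hε₀
  have hε₀pos : 0 < ε₀ := by positivity
  obtain ⟨δ, hδpos, hδr0, hC1⟩ := C1 ε₀ hε₀pos
  set T : ℝ := δ / 2 with hT
  have hTpos : 0 < T := by positivity
  have hTδ : T < δ := by rw [hT]; linarith
  have hTr0 : T < r0 := by rw [hT]; linarith
  set s₁ : ℝ := T / (m * Real.sqrt k) with hs₁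
  have hs₁pos : 0 < s₁ := by positivity
  have hsk0 : (0:ℝ) < Real.sqrt k := by linarith
  have hs₁T : s₁ * m * Real.sqrt k = T := by
    rw [hs₁]; field_simp
  have hs₁leT : s₁ ≤ T := by
    rw [hs₁]
    calc T / (m * Real.sqrt k) ≤ T / 1 := by
          apply div_le_div_of_nonneg_left hTpos.le ?_ ?_ <;> nlinarith
      _ = T := by ring
  obtain ⟨S, hScard, hSnorm, hSsep⟩ := grid_lb k m s₁ hs₁pos
  -- transporting the grid into K ⊆ Eucl n
  set ι : EuclideanSpace ℝ (Fin k) → Eucl n := fun w => ((bK.repr.symm w : K) : Eucl n) with hι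
  have hι_norm : ∀ w, ‖ι w‖ = ‖w‖ := by
    intro w
    rw [hι]
    rw [show ‖((bK.repr.symm w : K) : Eucl n)‖ = ‖bK.repr.symm w‖ from rfl,
      LinearIsometryEquiv.norm_map]
  have hι_sub : ∀ w w', ι w - ι w' = ι (w - w') := by
    intro w w'
    rw [hι]
    simp [map_sub]
  have hι_memK : ∀ w, ι w ∈ K := fun w => (bK.repr.symm w).2
  -- the comparison map into L
  set Q : Eucl n → Eucl n := fun u => (L.orthogonalProjectionOnto u : Eucl n) with hQ
  set g : EuclideanSpace ℝ (Fin k) → EuclideanSpace ℝ (Fin l) :=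
    fun w => bL.repr (L.orthogonalProjectionOnto (ψ (ι w))) with hg
  have hg_dist : ∀ w w', ‖g w - g w'‖ = ‖Q (ψ (ι w)) - Q (ψ (ι w'))‖ := by
    intro w w'
    rw [hg, hQ]
    rw [← map_sub, bL.repr.norm_map]
    rfl
  -- pointwise estimates on grid points
  have hkey : ∀ w ∈ S, ‖ι w‖ ≤ T ∧ ‖ψ (ι w) - Q (ψ (ι w))‖ ≤ s₁ / (4*c) ∧ ‖ψ (ι w)‖ ≤ c * T := by
    intro w hw
    have h1 : ‖ι w‖ ≤ T := by
      rw [hι_norm]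
      calc ‖w‖ ≤ s₁ * m * Real.sqrt k := hSnorm w hw
        _ = T := hs₁T
    have h1' : ‖ι w‖ < δ := lt_of_le_of_lt h1 hTδ
    have h1r0 : ‖ι w‖ < r0 := lt_of_le_of_lt h1 hTr0
    have h2 : ‖B (ψ (ι w))‖ ≤ ε₀ * ‖ι w‖ := hC1 (ι w) (hι_memK w) h1'
    have h3 : ‖ψ (ι w) - Q (ψ (ι w))‖ ≤ s₁ / (4*c) := by
      calc ‖ψ (ι w) - Q (ψ (ι w))‖ ≤ γ * ‖B (ψ (ι w))‖ := hproj _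
        _ ≤ γ * (ε₀ * ‖ι w‖) := by gcongr
        _ ≤ γ * (ε₀ * T) := by
            have := hε₀pos
            gcongr
        _ = s₁ / (4*c) := by
            rw [hε₀, hs₁]
            field_simp
    have h4 : ‖ψ (ι w)‖ ≤ c * T := by
      have h0 : ‖(0 : Eucl n)‖ < r0 := by simpa using hr0
      have := (hbil (ι w) 0 h1r0 h0).2
      rw [hψ0, sub_zero, sub_zero] at this
      calc ‖ψ (ι w)‖ ≤ c * ‖ι w‖ := this
        _ ≤ c * T := by gcongr
    exact ⟨h1, h3, h4⟩
  -- separation of the images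
  have hgsep : ∀ w ∈ S, ∀ w' ∈ S, w ≠ w' → s₁/(2*c) ≤ ‖g w - g w'‖ := by
    intro w hw w' hw' hne
    obtain ⟨hT1, hP1, -⟩ := hkey w hw
    obtain ⟨hT2, hP2, -⟩ := hkey w' hw'
    have hlow : (1/c) * ‖ι w - ι w'‖ ≤ ‖ψ (ι w) - ψ (ι w')‖ :=
      (hbil (ι w) (ι w') (lt_of_le_of_lt hT1 hTr0) (lt_of_le_of_lt hT2 hTr0)).1
    have hsep' : s₁ ≤ ‖ι w - ι w'‖ := by
      rw [hι_sub, hι_norm]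
      exact hSsep w hw w' hw' hne
    have hlow2 : s₁ / c ≤ ‖ψ (ι w) - ψ (ι w')‖ := by
      calc s₁ / c = (1/c) * s₁ := by ring
        _ ≤ (1/c) * ‖ι w - ι w'‖ := by gcongr
        _ ≤ ‖ψ (ι w) - ψ (ι w')‖ := hlow
    rw [hg_dist]
    have htri : ‖ψ (ι w) - ψ (ι w')‖ ≤ ‖Q (ψ (ι w)) - Q (ψ (ι w'))‖
        + ‖ψ (ι w) - Q (ψ (ι w))‖ + ‖ψ (ι w') - Q (ψ (ι w'))‖ := by
      have heq : ψ (ι w) - ψ (ι w') = (Q (ψ (ι w)) - Q (ψ (ι w')))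
          + (ψ (ι w) - Q (ψ (ι w))) - (ψ (ι w') - Q (ψ (ι w'))) := by abel
      rw [heq]
      calc ‖(Q (ψ (ι w)) - Q (ψ (ι w'))) + (ψ (ι w) - Q (ψ (ι w))) - (ψ (ι w') - Q (ψ (ι w')))‖
          ≤ ‖(Q (ψ (ι w)) - Q (ψ (ι w'))) + (ψ (ι w) - Q (ψ (ι w)))‖ + ‖ψ (ι w') - Q (ψ (ι w'))‖ :=
            norm_sub_le _ _
        _ ≤ ‖Q (ψ (ι w)) - Q (ψ (ι w'))‖ + ‖ψ (ι w) - Q (ψ (ι w))‖ + ‖ψ (ι w') - Q (ψ (ι w'))‖ := by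
            have := norm_add_le (Q (ψ (ι w)) - Q (ψ (ι w'))) (ψ (ι w) - Q (ψ (ι w)))
            linarith
    have hq : s₁/(4*c) + s₁/(4*c) = s₁/(2*c) := by ring
    have : s₁ / c - s₁/(2*c) ≤ ‖Q (ψ (ι w)) - Q (ψ (ι w'))‖ := by linarith
    have heq2 : s₁ / c - s₁/(2*c) = s₁/(2*c) := by ring
    linarith [heq2, this]
  -- norms of the images
  have hgnorm : ∀ z ∈ Finset.image g S, ‖z‖ ≤ 2*c*T := by
    intro z hz
    rcases Finset.mem_image.1 hz with ⟨w, hw, rfl⟩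
    obtain ⟨hT1, hP1, hN1⟩ := hkey w hw
    have h1 : ‖g w‖ = ‖Q (ψ (ι w))‖ := by
      show ‖bL.repr ((L.orthogonalProjectionOnto) (ψ (ι w)))‖ = _
      rw [bL.repr.norm_map]
      rfl
    rw [h1]
    have htri : ‖Q (ψ (ι w))‖ ≤ ‖ψ (ι w)‖ + ‖ψ (ι w) - Q (ψ (ι w))‖ := by
      have h := norm_sub_le (ψ (ι w)) (ψ (ι w) - Q (ψ (ι w)))
      have heq : ψ (ι w) - (ψ (ι w) - Q (ψ (ι w))) = Q (ψ (ι w)) := by abel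
      rw [heq] at h
      exact h
    have hs₁4 : s₁/(4*c) ≤ T := by
      have h5 : s₁/(4*c) ≤ s₁/1 :=
        div_le_div_of_nonneg_left hs₁pos.le one_pos (by linarith)
      rw [div_one] at h5
      linarith
    have hTcT : T ≤ c * T := le_mul_of_one_le_left hTpos.le hc
    calc ‖Q (ψ (ι w))‖ ≤ c * T + T := by linarith
      _ ≤ 2*c*T := by linarith
  -- apply the counting bound
  have hginj : Set.InjOn g S := by
    intro w hw w' hw' hgw
    by_contra hne
    have := hgsep w hw w' hw' hne
    rw [hgw] at this
    simp only [sub_self, norm_zero] at this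
    have : (0:ℝ) < s₁/(2*c) := by positivity
    linarith
  have hcard' : (Finset.image g S).card = m ^ k := by
    rw [Finset.card_image_of_injOn hginj, hScard]
  have hub := sep_ub (2*c*T) (s₁/(2*c)) (by positivity) (by positivity)
    (Finset.image g S) hgnorm (by
      intro z hz z' hz' hne
      rcases Finset.mem_image.1 hz with ⟨w, hw, rfl⟩
      rcases Finset.mem_image.1 hz' with ⟨w', hw', rfl⟩
      have hwne : w ≠ w' := by rintro rfl; exact hne rfl
      exact hgsep w hw w' hw' hwne)
  rw [hcard'] at hub
  -- numeric contradiction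
  have hTs₁ : T / s₁ = m * Real.sqrt k := by
    rw [hs₁]
    field_simp
  have hEcalc : 2 * (2*c*T) * (Real.sqrt l + 1) / (s₁/(2*c)) + 3
      = 8 * c^2 * (Real.sqrt l + 1) * (m * Real.sqrt k) + 3 := by
    rw [← hTs₁]
    field_simp
    ring
  have hED : 8 * c^2 * (Real.sqrt l + 1) * ((m:ℝ) * Real.sqrt k) + 3 ≤ D * m := by
    rw [hD]
    have h1 : 8 * c^2 * (Real.sqrt l + 1) * ((m:ℝ) * Real.sqrt k)
        = (8 * c^2 * (Real.sqrt l + 1) * Real.sqrt k) * m := by ring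
    rw [h1]
    have h2 : (3:ℝ) ≤ 3 * m := by linarith
    nlinarith
  have hfinal : ((m:ℝ)) ^ k ≤ (D * m) ^ l := by
    calc ((m:ℝ)) ^ k = ((m ^ k : ℕ) : ℝ) := by push_cast; ring
      _ ≤ (2 * (2*c*T) * (Real.sqrt l + 1) / (s₁/(2*c)) + 3) ^ l := hub
      _ = (8 * c^2 * (Real.sqrt l + 1) * ((m:ℝ) * Real.sqrt k) + 3) ^ l := by rw [hEcalc]
      _ ≤ (D * m) ^ l := by
          apply pow_le_pow_left₀ (by positivity) hED
  have hml : ((m:ℝ)) ^ k = (m:ℝ) ^ l * (m:ℝ) ^ (k - l) := by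
    rw [← pow_add]
    congr 1
    omega
  have hmkl : (m:ℝ) ^ (k - l) ≤ D ^ l := by
    have h1 : (m:ℝ) ^ l * (m:ℝ) ^ (k - l) ≤ D ^ l * (m:ℝ) ^ l := by
      rw [← hml]
      calc ((m:ℝ)) ^ k ≤ (D * m) ^ l := hfinal
        _ = D ^ l * (m:ℝ) ^ l := by rw [mul_pow]
    have h2 : (0:ℝ) < (m:ℝ) ^ l := by positivity
    nlinarith
  have hmm : (m:ℝ) ≤ (m:ℝ) ^ (k - l) := by
    have h1 : 1 ≤ k - l := by omega
    calc (m:ℝ) = (m:ℝ) ^ 1 := by ring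
      _ ≤ (m:ℝ) ^ (k - l) := pow_le_pow_right₀ hm1R h1
  have : (m:ℝ) < (m:ℝ) := lt_of_le_of_lt (hmm.trans hmkl) hmD
  exact lt_irrefl _ this

/-- if `F ≈_x G` via a lipeomorphism `φ`, then
`rank D_x F = rank D_{φ(x)} G`. -/
theorem rank_fderiv_of_asympLipEquiv {n p : ℕ}
    (U V : Set (Eucl n)) (hU : IsOpen U) (hV : IsOpen V)
    (F G : Eucl n → Eucl p)
    (hF : ∀ y ∈ U, DifferentiableAt ℝ F y) (hG : ∀ y ∈ V, DifferentiableAt ℝ G y)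
    (φ : Eucl n → Eucl n) (hφ : IsLipeoOn φ U V)
    (x : Eucl n) (hx : x ∈ U)
    (hequiv : AsympLipEquivAtVia F G φ x) :
    LinearMap.rank ((fderiv ℝ F x : Eucl n →L[ℝ] Eucl p) : Eucl n →ₗ[ℝ] Eucl p) =
      LinearMap.rank ((fderiv ℝ G (φ x) : Eucl n →L[ℝ] Eucl p) : Eucl n →ₗ[ℝ] Eucl p) := by
  obtain ⟨hbij, c₀, hc₀, hlip⟩ := hφ
  obtain ⟨c₁, hc₁, hev⟩ := hequiv
  rw [Metric.eventually_nhds_iff] at hev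
  obtain ⟨ρ, hρ, hev⟩ := hev
  have hc₀pos : (0:ℝ) < c₀ := lt_of_lt_of_le one_pos hc₀
  have hc₁pos : (0:ℝ) < c₁ := lt_of_lt_of_le one_pos hc₁
  set c : ℝ := max c₀ c₁ with hcdef
  have hc : 1 ≤ c := le_trans hc₀ (le_max_left _ _)
  have hcpos : (0:ℝ) < c := lt_of_lt_of_le one_pos hc
  have hφx : φ x ∈ V := hbij.mapsTo hx
  set φinv : Eucl n → Eucl n := Function.invFunOn φ U with hφinvdef
  have hinvφ : ∀ a ∈ U, φinv (φ a) = a := fun a ha => hbij.invOn_invFunOn.1 ha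
  have hφinv' : ∀ b ∈ V, φ (φinv b) = b := fun b hb => hbij.invOn_invFunOn.2 hb
  have hmemU : ∀ b ∈ V, φinv b ∈ U := fun b hb => hbij.surjOn.mapsTo_invFunOn hb
  obtain ⟨rU, hrU, hballU⟩ := Metric.isOpen_iff.1 hU x hx
  obtain ⟨rV, hrV, hballV⟩ := Metric.isOpen_iff.1 hV (φ x) hφx
  have hmemball : ∀ (z : Eucl n) (v : Eucl n) (r : ℝ), ‖v‖ < r → z + v ∈ Metric.ball z r := by
    intro z v r h
    rw [Metric.mem_ball, dist_eq_norm, add_sub_cancel_left]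
    exact h
  -- Forward direction
  have KLE1 : Module.finrank ℝ (LinearMap.ker ((fderiv ℝ F x : Eucl n →L[ℝ] Eucl p) : Eucl n →ₗ[ℝ] Eucl p)) ≤
      Module.finrank ℝ (LinearMap.ker ((fderiv ℝ G (φ x) : Eucl n →L[ℝ] Eucl p) : Eucl n →ₗ[ℝ] Eucl p)) := by
    apply ker_le_ker F G x (φ x) (hF x hx) (hG _ hφx) (fun v => φ (x + v) - φ x) c hc
      (min ρ rU) (lt_min hρ hrU)
    · simp
    · intro v v' hv hv'
      have hvU : x + v ∈ U := hballU (hmemball x v rU (lt_of_lt_of_le hv (min_le_right _ _)))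
      have hv'U : x + v' ∈ U := hballU (hmemball x v' rU (lt_of_lt_of_le hv' (min_le_right _ _)))
      have h := hlip (x + v) hvU (x + v') hv'U
      have heq1 : x + v - (x + v') = v - v' := by abel
      have heq2 : φ (x + v) - φ x - (φ (x + v') - φ x) = φ (x + v) - φ (x + v') := by abel
      rw [heq1] at h
      rw [heq2]
      constructor
      · calc (1/c) * ‖v - v'‖ ≤ (1/c₀) * ‖v - v'‖ := by
              gcongr
              exact le_max_left _ _
          _ ≤ ‖φ (x + v) - φ (x + v')‖ := h.1
      · calc ‖φ (x + v) - φ (x + v')‖ ≤ c₀ * ‖v - v'‖ := h.2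
          _ ≤ c * ‖v - v'‖ := by gcongr; exact le_max_left _ _
    · intro v hv
      have hvρ : ‖v‖ < ρ := lt_of_lt_of_le hv (min_le_left _ _)
      have h := (hev (y := x + v) (by rw [dist_eq_norm, add_sub_cancel_left]; exact hvρ)).2
      have heq : φ x + (φ (x + v) - φ x) = φ (x + v) := by abel
      rw [heq]
      calc ‖G (φ (x + v)) - G (φ x)‖ ≤ c₁ * ‖F (x + v) - F x‖ := h
        _ ≤ c * ‖F (x + v) - F x‖ := by gcongr; exact le_max_right _ _
  -- Backward direction
  have KLE2 : Module.finrank ℝ (LinearMap.ker ((fderiv ℝ G (φ x) : Eucl n →L[ℝ] Eucl p) : Eucl n →ₗ[ℝ] Eucl p)) ≤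
      Module.finrank ℝ (LinearMap.ker ((fderiv ℝ F x : Eucl n →L[ℝ] Eucl p) : Eucl n →ₗ[ℝ] Eucl p)) := by
    apply ker_le_ker G F (φ x) x (hG _ hφx) (hF x hx)
      (fun w => φinv (φ x + w) - x) c hc (min rV (ρ / c₀)) (lt_min hrV (by positivity))
    · simp only [add_zero]
      rw [hinvφ x hx, sub_self]
    · intro w w' hw hw'
      have hwV : φ x + w ∈ V := hballV (hmemball (φ x) w rV (lt_of_lt_of_le hw (min_le_left _ _)))
      have hw'V : φ x + w' ∈ V := hballV (hmemball (φ x) w' rV (lt_of_lt_of_le hw' (min_le_left _ _)))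
      have haU : φinv (φ x + w) ∈ U := hmemU _ hwV
      have ha'U : φinv (φ x + w') ∈ U := hmemU _ hw'V
      have h := hlip (φinv (φ x + w)) haU (φinv (φ x + w')) ha'U
      rw [hφinv' _ hwV, hφinv' _ hw'V] at h
      have heq1 : φ x + w - (φ x + w') = w - w' := by abel
      rw [heq1] at h
      have heq2 : φinv (φ x + w) - x - (φinv (φ x + w') - x) = φinv (φ x + w) - φinv (φ x + w') := by abel
      rw [heq2]
      constructor
      · calc (1/c) * ‖w - w'‖ ≤ (1/c₀) * ‖w - w'‖ := by gcongr; exact le_max_left _ _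
          _ ≤ ‖φinv (φ x + w) - φinv (φ x + w')‖ := by
              rw [div_mul_eq_mul_div, one_mul, div_le_iff₀ hc₀pos, mul_comm]
              exact h.2
      · calc ‖φinv (φ x + w) - φinv (φ x + w')‖ ≤ c₀ * ‖w - w'‖ := by
              have h1 := h.1
              rw [div_mul_eq_mul_div, one_mul, div_le_iff₀ hc₀pos] at h1
              linarith [h1]
          _ ≤ c * ‖w - w'‖ := by gcongr; exact le_max_left _ _
    · intro w hw
      have hwV : φ x + w ∈ V := hballV (hmemball (φ x) w rV (lt_of_lt_of_le hw (min_le_left _ _)))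
      have hyU : φinv (φ x + w) ∈ U := hmemU _ hwV
      have heq : x + (φinv (φ x + w) - x) = φinv (φ x + w) := by abel
      rw [heq]
      -- distance from x
      have hdist : ‖φinv (φ x + w) - x‖ ≤ c₀ * ‖w‖ := by
        have h := hlip (φinv (φ x + w)) hyU x hx
        rw [hφinv' _ hwV] at h
        have h1 := h.1
        rw [div_mul_eq_mul_div, one_mul, div_le_iff₀ hc₀pos] at h1
        have heq1 : φ x + w - φ x = w := by abel
        rw [heq1] at h1
        linarith
      have hρ' : ‖φinv (φ x + w) - x‖ < ρ := by
        have hwρ : ‖w‖ < ρ / c₀ := lt_of_lt_of_le hw (min_le_right _ _)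
        calc ‖φinv (φ x + w) - x‖ ≤ c₀ * ‖w‖ := hdist
          _ < c₀ * (ρ / c₀) := by gcongr
          _ = ρ := by field_simp
      have h := (hev (y := φinv (φ x + w)) (by rw [dist_eq_norm]; exact hρ')).1
      rw [hφinv' _ hwV] at h
      rw [div_mul_eq_mul_div, one_mul, div_le_iff₀ hc₁pos] at h
      calc ‖F (φinv (φ x + w)) - F x‖ ≤ ‖G (φ x + w) - G (φ x)‖ * c₁ := h
        _ = c₁ * ‖G (φ x + w) - G (φ x)‖ := by ring
        _ ≤ c * ‖G (φ x + w) - G (φ x)‖ := by gcongr; exact le_max_right _ _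
  -- conclude
  have hkk := le_antisymm KLE1 KLE2
  have h1 := LinearMap.finrank_range_add_finrank_ker
    ((fderiv ℝ F x : Eucl n →L[ℝ] Eucl p) : Eucl n →ₗ[ℝ] Eucl p)
  have h2 := LinearMap.finrank_range_add_finrank_ker
    ((fderiv ℝ G (φ x) : Eucl n →L[ℝ] Eucl p) : Eucl n →ₗ[ℝ] Eucl p)
  have hr : Module.finrank ℝ (LinearMap.range ((fderiv ℝ F x : Eucl n →L[ℝ] Eucl p) : Eucl n →ₗ[ℝ] Eucl p))
      = Module.finrank ℝ (LinearMap.range ((fderiv ℝ G (φ x) : Eucl n →L[ℝ] Eucl p) : Eucl n →ₗ[ℝ] Eucl p)) := by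
    omega
  calc LinearMap.rank ((fderiv ℝ F x : Eucl n →L[ℝ] Eucl p) : Eucl n →ₗ[ℝ] Eucl p)
      = Module.rank ℝ (LinearMap.range ((fderiv ℝ F x : Eucl n →L[ℝ] Eucl p) : Eucl n →ₗ[ℝ] Eucl p)) := rfl
    _ = (Module.finrank ℝ (LinearMap.range ((fderiv ℝ F x : Eucl n →L[ℝ] Eucl p) : Eucl n →ₗ[ℝ] Eucl p)) : Cardinal) :=
        (Module.finrank_eq_rank ℝ _).symm
    _ = (Module.finrank ℝ (LinearMap.range ((fderiv ℝ G (φ x) : Eucl n →L[ℝ] Eucl p) : Eucl n →ₗ[ℝ] Eucl p)) : Cardinal) := by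
        rw [hr]
    _ = Module.rank ℝ (LinearMap.range ((fderiv ℝ G (φ x) : Eucl n →L[ℝ] Eucl p) : Eucl n →ₗ[ℝ] Eucl p)) :=
        Module.finrank_eq_rank ℝ _
    _ = LinearMap.rank ((fderiv ℝ G (φ x) : Eucl n →L[ℝ] Eucl p) : Eucl n →ₗ[ℝ] Eucl p) := rfl
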